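/- Let n > d ≥ 3 and let ℓ be an integer with 3 ≤ ℓ ≤ n satisfying n + d − 1 ≤ 2ℓ. Then the number of circuits of length ℓ in T_{d,n} equals the binomial coefficient C(n−d+1, n−ℓ). -/

import Mathlib

/-- A tournament on a vertex type `V`: every ordered pair of distinct vertices
carries exactly one arc. `adj v w = true` means there is an arc from `v` to `w`
(`v` dominates `w`). -/
structure Tournament (V : Type*) where
  adj : V → V → Bool
  irrefl : ∀ v, adj v v = false
  compl : ∀ v w, v ≠ w → adj v w = !adj w v

namespace Tournament

variable {V : Type*} {W : Type*}

/-- The subtournament induced on a set of vertices. -/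
def restrict (T : Tournament V) (s : Set V) : Tournament s where
  adj a b := T.adj a b
  irrefl a := T.irrefl a
  compl a b h := T.compl a b (fun hab => h (Subtype.ext hab))

/-- A tournament is strongly connected if every vertex can be reached from
every other one by a directed path. -/
def Strong (T : Tournament V) : Prop :=
  ∀ v w : V, Relation.ReflTransGen (fun a b => T.adj a b = true) v w

/-- A vertex of a tournament is non-critical if deleting it leaves a strongly
connected tournament. -/
def Noncritical (T : Tournament V) (w : V) : Prop :=
  (T.restrict {x | x ≠ w}).Strong

/-- There is a directed walk of length `k` from `v` to `w`. -/
def HasWalk (T : Tournament V) (v w : V) (k : ℕ) : Prop :=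
  ∃ f : Fin (k + 1) → V, f 0 = v ∧ f (Fin.last k) = w ∧
    ∀ i : Fin k, T.adj (f i.castSucc) (f i.succ) = true

/-- The distance from `v` to `w`: the length of a shortest directed path. -/
noncomputable def dist (T : Tournament V) (v w : V) : ℕ :=
  sInf {k | T.HasWalk v w k}

/-- The diameter: the maximum distance over ordered pairs of distinct vertices. -/
noncomputable def diam (T : Tournament V) : ℕ :=
  sSup {m | ∃ v w : V, v ≠ w ∧ T.dist v w = m}

/-- Cyclic successor on `Fin ℓ`. -/
def cyc {ℓ : ℕ} (i : Fin ℓ) : Fin ℓ :=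
  if h : i.val + 1 < ℓ then ⟨i.val + 1, h⟩ else ⟨0, i.pos⟩

/-- The number of circuits (directed cycles through distinct vertices) of
length `ℓ` in `T`.  Each circuit is represented by exactly `ℓ` cyclic
parametrisations, whence the division. -/
noncomputable def circCount (T : Tournament V) (ℓ : ℕ) : ℕ :=
  Nat.card {f : Fin ℓ → V // Function.Injective f ∧
    ∀ i : Fin ℓ, T.adj (f i) (f (cyc i)) = true} / ℓ

/-- The number of circuits of length `ℓ` in `T` passing through the vertex `w`. -/
noncomputable def circCountAt (T : Tournament V) (ℓ : ℕ) (w : V) : ℕ :=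
  Nat.card {f : Fin ℓ → V // Function.Injective f ∧
    (∀ i : Fin ℓ, T.adj (f i) (f (cyc i)) = true) ∧ ∃ i, f i = w} / ℓ

/-- The number of strongly connected subtournaments of order `ℓ` in `T`. -/
noncomputable def strongSubCount (T : Tournament V) (ℓ : ℕ) : ℕ :=
  Nat.card {s : Finset V // s.card = ℓ ∧ (T.restrict ↑s).Strong}

/-- Isomorphism of tournaments. -/
def Iso (T : Tournament V) (S : Tournament W) : Prop :=
  ∃ e : V ≃ W, ∀ a b : V, T.adj a b = S.adj (e a) (e b)

/-- Build a tournament from the function `f` recording which arcs point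
"upwards" with respect to a linear order on the vertices. -/
def ofFn [LinearOrder V] (f : V → V → Bool) : Tournament V where
  adj u v := if u < v then f u v else if v < u then !f v u else false
  irrefl v := by simp
  compl u v h := by
    rcases lt_trichotomy u v with h1 | h1 | h1
    · simp [h1, not_lt_of_gt h1]
    · exact absurd h1 h
    · simp [h1, not_lt_of_gt h1]

/-- The tournament `T_{n-1,n}(z_0,…,z_{n-1})`: `z_i → z_{i+1}` and `z_j → z_i`
for `j > i + 1`. -/
def lineT (n : ℕ) : Tournament (Fin n) :=
  ofFn fun i j => decide (j.val = i.val + 1)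

end Tournament

/-- Block index used to describe `T_{d,n}`: the vertices `0,…,a-1` form the
first block (corresponding to `z_0` of `T_{d,d+1}`), the next `d-1` vertices
are the singleton blocks `z_1,…,z_{d-1}`, and the remaining vertices form the
last block (corresponding to `z_d`). -/
def blockIdx (a d x : ℕ) : ℕ :=
  if x < a then 0 else if x < a + d - 1 then x - a + 1 else d

/-- The composition `T_{d,d+1}(TT_a, v_1, …, v_{d-1}, TT_b)` on `Fin n`
(`b = n - a - (d-1)`): within a block the tournament is transitive, and
between distinct blocks the arcs follow `T_{d,d+1}`. -/
def TdnAux (a d n : ℕ) : Tournament (Fin n) :=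
  Tournament.ofFn fun i j => decide (blockIdx a d j.val ≤ blockIdx a d i.val + 1)

/-- `T_{d,n} = T_{d,d+1}(TT_{⌊(n-d+1)/2⌋}, v_1, …, v_{d-1}, TT_{⌈(n-d+1)/2⌉})`. -/
def Tdn (d n : ℕ) : Tournament (Fin n) := TdnAux ((n - d + 1) / 2) d n

/-- `T_{d,n}^- = T_{d,d+1}(TT_{⌈(n-d+1)/2⌉}, v_1, …, v_{d-1}, TT_{⌊(n-d+1)/2⌋})`. -/
def Tdnm (d n : ℕ) : Tournament (Fin n) := TdnAux ((n - d + 2) / 2) d n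

namespace S14
open Finset

theorem val_add_one' {ℓ : ℕ} [NeZero ℓ] (i : Fin ℓ) : ((i+1) : Fin ℓ).val = if i.val + 1 < ℓ then i.val+1 else 0 := by
  have h1 : (1 : Fin ℓ).val = 1 % ℓ := Fin.val_one' ℓ
  have hl : ℓ ≥ 1 := Nat.one_le_iff_ne_zero.2 (NeZero.ne ℓ)
  have h2 : ((i+1) : Fin ℓ).val = (i.val + (1:Fin ℓ).val) % ℓ := by rw [Fin.add_def]
  have hi := i.isLt
  rw [h1] at h2
  rcases Nat.lt_or_ge 1 ℓ with h|h
  · rw [Nat.mod_eq_of_lt h] at h2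
    rcases Nat.lt_or_ge (i.val+1) ℓ with h'|h'
    · rw [Nat.mod_eq_of_lt h'] at h2; simp [h2, h']
    · have : i.val + 1 = ℓ := by omega
      rw [this, Nat.mod_self] at h2; rw [h2, if_neg (by omega)]
  · have hℓ1 : ℓ = 1 := by omega
    subst hℓ1
    have : i.val = 0 := by omega
    simp [h2, this]

theorem cyc_add_one {ℓ : ℕ} [NeZero ℓ] (i : Fin ℓ) : Tournament.cyc i = i + 1 := by
  apply Fin.ext
  rw [val_add_one']
  unfold Tournament.cyc
  split_ifs <;> rfl

theorem bk_mono {a d : ℕ} {x y : ℕ} (h : x ≤ y) : blockIdx a d x ≤ blockIdx a d y := by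
  unfold blockIdx; split_ifs <;> omega

theorem bk_le (a d x : ℕ) (hd : 3 ≤ d) : blockIdx a d x ≤ d := by
  unfold blockIdx; split_ifs <;> omega

theorem bk_sing {a d x k : ℕ} (hd : 3 ≤ d) (h1 : 1 ≤ k) (h2 : k ≤ d - 1) :
    blockIdx a d x = k ↔ x = a + k - 1 := by
  unfold blockIdx; split_ifs <;> omega

theorem bk_low {a d x c : ℕ} (hd : 3 ≤ d) (hc : c ≤ d - 1) :
    blockIdx a d x ≤ c ↔ x < a + c := by
  unfold blockIdx; split_ifs <;> omega

theorem adj_iff {n : ℕ} (a d : ℕ) (u v : Fin n) :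
    (TdnAux a d n).adj u v = true ↔
      (u.val < v.val ∧ blockIdx a d v.val ≤ blockIdx a d u.val + 1) ∨
      (v.val < u.val ∧ blockIdx a d v.val + 2 ≤ blockIdx a d u.val) := by
  show (if u < v then _ else if v < u then _ else false) = true ↔ _
  rcases lt_trichotomy u v with h|h|h
  · rw [if_pos h]
    rw [Fin.lt_def] at h
    simp only [decide_eq_true_eq, Fin.lt_def]
    omega
  · subst h
    simp [Fin.lt_def]
  · rw [if_neg (by exact not_lt_of_gt h), if_pos h]
    rw [Fin.lt_def] at h
    simp only [Bool.not_eq_true', decide_eq_false_iff_not, Fin.lt_def]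
    omega

end S14

namespace S14
open Finset Function

theorem crossing {ℓ : ℕ} [NeZero ℓ] (g : Fin ℓ → Prop) [DecidablePred g] :
    (univ.filter fun i => g i ∧ ¬ g (i+1)).card
      = (univ.filter fun i => ¬ g i ∧ g (i+1)).card := by
  classical
  have hcard : (univ.filter (fun i => g (i+1))).card = (univ.filter g).card := by
    apply Finset.card_bij (fun i _ => i + 1)
    · intro a ha
      simp only [Finset.mem_filter, Finset.mem_univ, true_and] at ha ⊢
      exact ha
    · intro a _ b _ hab
      exact add_right_cancel hab
    · intro b hb
      simp only [Finset.mem_filter, Finset.mem_univ, true_and] at hb ⊢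
      exact ⟨b - 1, by rwa [sub_add_cancel], by rw [sub_add_cancel]⟩
  have h1 : (univ.filter fun i => g i ∧ ¬ g (i+1))
      = (univ.filter g) \ (univ.filter (fun i => g (i+1))) := by
    ext i; simp [Finset.mem_sdiff]
  have h2 : (univ.filter fun i => ¬ g i ∧ g (i+1))
      = (univ.filter (fun i => g (i+1))) \ (univ.filter g) := by
    ext i; simp [Finset.mem_sdiff, and_comm]
  rw [h1, h2]
  exact Finset.card_sdiff_comm hcard.symm

open Fin.NatCast in
theorem orbit_all {ℓ : ℕ} [NeZero ℓ] (g : Fin ℓ → Prop)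
    (hup : ∀ i, g i → g (i+1)) {i : Fin ℓ} (hi : g i) (j : Fin ℓ) : g j := by
  have key : ∀ k : ℕ, g (i + (k : Fin ℓ)) := by
    intro k
    induction k with
    | zero => simpa using hi
    | succ m ih =>
        have h := hup _ ih
        have hc : ((m+1 : ℕ) : Fin ℓ) = (m : Fin ℓ) + 1 := by push_cast; ring
        rw [hc, ← add_assoc]
        exact h
  have h := key (j - i).val
  rwa [Fin.cast_val_eq_self, add_comm, sub_add_cancel] at h

end S14

namespace S14
open Finset Function

variable {n d ℓ a : ℕ}

/-- Adjacency structure of `TdnAux` along the cycle. -/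
def Adj' [NeZero ℓ] (a d : ℕ) (f : Fin ℓ → Fin n) : Prop :=
  ∀ i : Fin ℓ,
    ((f i).val < (f (i+1)).val ∧
      blockIdx a d (f (i+1)).val ≤ blockIdx a d (f i).val + 1) ∨
    ((f (i+1)).val < (f i).val ∧
      blockIdx a d (f (i+1)).val + 2 ≤ blockIdx a d (f i).val)

def upX [NeZero ℓ] (a d : ℕ) (f : Fin ℓ → Fin n) (k : ℕ) : Finset (Fin ℓ) :=
  univ.filter fun i => blockIdx a d (f i).val ≤ k ∧ ¬ (blockIdx a d (f (i+1)).val ≤ k)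

def downX [NeZero ℓ] (a d : ℕ) (f : Fin ℓ → Fin n) (k : ℕ) : Finset (Fin ℓ) :=
  univ.filter fun i => ¬ (blockIdx a d (f i).val ≤ k) ∧ blockIdx a d (f (i+1)).val ≤ k

theorem card_upX [NeZero ℓ] (f : Fin ℓ → Fin n) (k : ℕ) :
    (upX a d f k).card = (downX a d f k).card := by
  unfold upX downX
  exact crossing (fun i => blockIdx a d (f i).val ≤ k)

theorem mem_upX [NeZero ℓ] {f : Fin ℓ → Fin n} {k : ℕ} {u : Fin ℓ} :
    u ∈ upX a d f k ↔
      blockIdx a d (f u).val ≤ k ∧ ¬ (blockIdx a d (f (u+1)).val ≤ k) := by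
  simp [upX]

theorem mem_downX [NeZero ℓ] {f : Fin ℓ → Fin n} {k : ℕ} {u : Fin ℓ} :
    u ∈ downX a d f k ↔
      ¬ (blockIdx a d (f u).val ≤ k) ∧ blockIdx a d (f (u+1)).val ≤ k := by
  simp [downX]

theorem upX_struct [NeZero ℓ] (hd : 3 ≤ d) {f : Fin ℓ → Fin n} (hadj : Adj' a d f) {k : ℕ}
    (hk : k + 2 ≤ d) {u : Fin ℓ} (hu : u ∈ upX a d f k) :
    blockIdx a d (f u).val = k ∧ (f (u+1)).val = a + k := by
  rw [mem_upX] at hu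
  obtain ⟨h1, h2⟩ := hu
  rcases hadj u with ⟨hlt, hb⟩ | ⟨hlt, hb⟩
  · have hbk : blockIdx a d (f (u+1)).val = k + 1 := by omega
    have hv := (bk_sing (x := (f (u+1)).val) hd (k := k+1) (by omega) (by omega)).1 hbk
    exact ⟨by omega, by omega⟩
  · omega

theorem card_upX_le_one [NeZero ℓ] (hd : 3 ≤ d) {f : Fin ℓ → Fin n} (hinj : Injective f)
    (hadj : Adj' a d f) (k : ℕ) : (upX a d f k).card ≤ 1 := by
  rcases lt_trichotomy k (d-1) with hk | hk | hk
  · apply Finset.card_le_one.2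
    intro u hu v hv
    have h1 := upX_struct hd hadj (by omega) hu
    have h2 := upX_struct hd hadj (by omega) hv
    have he : f (u+1) = f (v+1) := Fin.ext (by omega)
    exact add_right_cancel (hinj he)
  · apply Finset.card_le_one.2
    intro u hu v hv
    rw [mem_upX] at hu hv
    have hbu : blockIdx a d (f u).val = d - 1 := by
      rcases hadj u with ⟨hlt, hb⟩ | ⟨hlt, hb⟩
      · have := bk_le a d (f (u+1)).val hd; omega
      · have := bk_le a d (f u).val hd; omega
    have hbv : blockIdx a d (f v).val = d - 1 := by
      rcases hadj v with ⟨hlt, hb⟩ | ⟨hlt, hb⟩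
      · have := bk_le a d (f (v+1)).val hd; omega
      · have := bk_le a d (f v).val hd; omega
    have h1 := (bk_sing (x := (f u).val) hd (k := d-1) (by omega) (le_refl _)).1 hbu
    have h2 := (bk_sing (x := (f v).val) hd (k := d-1) (by omega) (le_refl _)).1 hbv
    exact hinj (Fin.ext (by omega))
  · have he : upX a d f k = ∅ := by
      apply Finset.eq_empty_of_forall_notMem
      intro u hu
      rw [mem_upX] at hu
      exact hu.2 (le_trans (bk_le a d _ hd) (by omega))
    simp [he]

theorem downX_descent [NeZero ℓ] {f : Fin ℓ → Fin n} (hadj : Adj' a d f) {k : ℕ} {i : Fin ℓ}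
    (hi : i ∈ downX a d f k) :
    (f (i+1)).val < (f i).val ∧ blockIdx a d (f (i+1)).val ≤ k ∧
      k < blockIdx a d (f i).val := by
  rw [mem_downX] at hi
  obtain ⟨h1, h2⟩ := hi
  rcases hadj i with ⟨hlt, hb⟩ | ⟨hlt, hb⟩
  · exact absurd (le_trans (bk_mono (le_of_lt hlt)) (by omega)) h1
  · exact ⟨hlt, h2, by omega⟩

theorem descent_block [NeZero ℓ] {f : Fin ℓ → Fin n} (hadj : Adj' a d f) {i : Fin ℓ}
    (hdes : (f (i+1)).val < (f i).val) :
    blockIdx a d (f (i+1)).val + 2 ≤ blockIdx a d (f i).val := by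
  rcases hadj i with ⟨hlt, hb⟩ | ⟨hlt, hb⟩
  · omega
  · exact hb

theorem stepA [NeZero ℓ] (ha : a = (n-d+1)/2) (hd : 3 ≤ d) (hdn : d < n) (hℓ2 : ℓ ≤ n)
    (h2ℓ : n + d - 1 ≤ 2*ℓ) {f : Fin ℓ → Fin n} (hinj : Injective f) (hadj : Adj' a d f)
    {k : ℕ} (hk1 : 1 ≤ k) (hk2 : k ≤ d-1) : ∃ i, (f i).val = a + k - 1 := by
  by_contra hno
  push_neg at hno
  have hnk : ∀ i, blockIdx a d (f i).val ≠ k := fun i hik => hno i ((bk_sing hd hk1 hk2).1 hik)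
  have hupe : (univ.filter fun i : Fin ℓ => blockIdx a d (f i).val ≤ k - 1 ∧
      ¬ (blockIdx a d (f (i+1)).val ≤ k - 1)) = ∅ := by
    apply Finset.eq_empty_of_forall_notMem
    intro i hi
    simp only [Finset.mem_filter, Finset.mem_univ, true_and] at hi
    obtain ⟨h1, h2⟩ := hi
    rcases hadj i with ⟨hlt, hb⟩ | ⟨hlt, hb⟩
    · have := hnk (i+1); omega
    · have := hnk (i+1); omega
  have hde : (univ.filter fun i : Fin ℓ => ¬ (blockIdx a d (f i).val ≤ k - 1) ∧
      blockIdx a d (f (i+1)).val ≤ k - 1) = ∅ := by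
    rw [← Finset.card_eq_zero, ← crossing (fun i => blockIdx a d (f i).val ≤ k - 1), hupe,
      Finset.card_empty]
  have hfwd : ∀ i : Fin ℓ, blockIdx a d (f i).val ≤ k - 1 →
      blockIdx a d (f (i+1)).val ≤ k - 1 := by
    intro i hi
    by_contra hni
    have hmem : i ∈ (univ.filter fun i : Fin ℓ => blockIdx a d (f i).val ≤ k - 1 ∧
        ¬ (blockIdx a d (f (i+1)).val ≤ k - 1)) := by
      simp only [Finset.mem_filter, Finset.mem_univ, true_and]; exact ⟨hi, hni⟩
    rw [hupe] at hmem
    exact absurd hmem (Finset.notMem_empty i)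
  have hbwd : ∀ i : Fin ℓ, ¬ (blockIdx a d (f i).val ≤ k - 1) →
      ¬ (blockIdx a d (f (i+1)).val ≤ k - 1) := by
    intro i hi hni
    have hmem : i ∈ (univ.filter fun i : Fin ℓ => ¬ (blockIdx a d (f i).val ≤ k - 1) ∧
        blockIdx a d (f (i+1)).val ≤ k - 1) := by
      simp only [Finset.mem_filter, Finset.mem_univ, true_and]; exact ⟨hi, hni⟩
    rw [hde] at hmem
    exact absurd hmem (Finset.notMem_empty i)
  by_cases hex : ∀ i : Fin ℓ, blockIdx a d (f i).val ≤ k - 1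
  · have hbound : ∀ i : Fin ℓ, (f i).val < a + (k-1) := by
      intro i
      exact (bk_low hd (by omega)).1 (hex i)
    have hcard : ℓ ≤ a + (k-1) := by
      have hinj2 : Injective (fun i : Fin ℓ => (⟨(f i).val, hbound i⟩ : Fin (a + (k-1)))) := by
        intro x y hxy
        have hv : (f x).val = (f y).val := by simpa using congrArg Fin.val hxy
        exact hinj (Fin.ext hv)
      simpa using Fintype.card_le_of_injective _ hinj2
    omega
  · push_neg at hex
    obtain ⟨i0, hi0⟩ := hex
    have hi0' : ¬ (blockIdx a d (f i0).val ≤ k - 1) := by omega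
    have hall : ∀ j : Fin ℓ, ¬ (blockIdx a d (f j).val ≤ k - 1) :=
      fun j => orbit_all (fun i => ¬ (blockIdx a d (f i).val ≤ k - 1)) hbwd hi0' j
    have hbound : ∀ i : Fin ℓ, a + k ≤ (f i).val := by
      intro i
      have h1 := hall i
      have h2 := hnk i
      have h3 : ¬ (blockIdx a d (f i).val ≤ k) := by omega
      have h4 := (bk_low (a := a) (d := d) (x := (f i).val) (c := k) hd (by omega)).2
      omega
    have hcard : ℓ ≤ n - (a+k) := by
      have hinj2 : Injective (fun i : Fin ℓ =>
          (⟨(f i).val - (a+k), by have := (f i).isLt; have := hbound i; omega⟩ :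
            Fin (n - (a+k)))) := by
        intro x y hxy
        have hv : (f x).val - (a+k) = (f y).val - (a+k) := by simpa using congrArg Fin.val hxy
        have := hbound x; have := hbound y
        exact hinj (Fin.ext (by omega))
      simpa using Fintype.card_le_of_injective _ hinj2
    omega

end S14

namespace S14
open Finset Function

variable {n d ℓ a : ℕ}

theorem unique_descent [NeZero ℓ] (ha : a = (n-d+1)/2) (hd : 3 ≤ d) (hdn : d < n)
    (hℓ1 : 3 ≤ ℓ) (hℓ2 : ℓ ≤ n) (h2ℓ : n + d - 1 ≤ 2*ℓ) {f : Fin ℓ → Fin n}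
    (hinj : Injective f) (hadj : Adj' a d f) :
    ∃! i₀ : Fin ℓ, f (i₀ + 1) < f i₀ := by
  have hcov : ∀ k : ℕ, 1 ≤ k → k ≤ d-2 → (downX a d f k).Nonempty := by
    intro k hk1 hk2
    rcases Finset.eq_empty_or_nonempty (downX a d f k) with he | hne
    · exfalso
      have hue : upX a d f k = ∅ := by
        rw [← Finset.card_eq_zero, card_upX, he, Finset.card_empty]
      have hfwd : ∀ i : Fin ℓ, blockIdx a d (f i).val ≤ k →
          blockIdx a d (f (i+1)).val ≤ k := by
        intro i hi
        by_contra hni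
        have hmem : i ∈ upX a d f k := mem_upX.2 ⟨hi, hni⟩
        rw [hue] at hmem
        exact absurd hmem (Finset.notMem_empty i)
      obtain ⟨iL, hiL⟩ := stepA ha hd hdn hℓ2 h2ℓ hinj hadj hk1 (by omega)
      obtain ⟨iH, hiH⟩ := stepA ha hd hdn hℓ2 h2ℓ hinj hadj (k := k+1) (by omega) (by omega)
      have hgL : blockIdx a d (f iL).val = k := (bk_sing hd hk1 (by omega)).2 hiL
      have hgH : blockIdx a d (f iH).val = k+1 := (bk_sing hd (by omega) (by omega)).2 hiH
      have := orbit_all (fun i => blockIdx a d (f i).val ≤ k) hfwd (i := iL) (by omega) iH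
      omega
    · exact hne
  obtain ⟨i₁, hi₁⟩ := hcov 1 le_rfl (by omega)
  obtain ⟨hdes₁, hq₁, hp₁⟩ := downX_descent hadj hi₁
  have hdisj : ∀ (k : ℕ) (x y : Fin ℓ), x ∈ downX a d f k → y ∈ downX a d f k → x = y := by
    intro k x y hx hy
    have hcard1 : (downX a d f k).card ≤ 1 := by
      rw [← card_upX]; exact card_upX_le_one hd hinj hadj k
    exact Finset.card_le_one.1 hcard1 x hx y hy
  have hstep : ∀ j : Fin ℓ, (f (j+1)).val < (f j).val → j ≠ i₁ →
      blockIdx a d (f i₁).val ≤ blockIdx a d (f (j+1)).val := by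
    intro j hj hne
    by_contra hlt
    have hbj := descent_block hadj hj
    have hxi : i₁ ∈ downX a d f (max (blockIdx a d (f (j+1)).val) 1) :=
      mem_downX.2 ⟨by omega, by omega⟩
    have hxj : j ∈ downX a d f (max (blockIdx a d (f (j+1)).val) 1) :=
      mem_downX.2 ⟨by omega, by omega⟩
    exact hne (hdisj _ j i₁ hxj hxi)
  have huniq : ∀ j : Fin ℓ, (f (j+1)).val < (f j).val → j = i₁ := by
    intro j hj
    by_contra hne
    have hqj := hstep j hj hne
    have hbj := descent_block hadj hj
    have hpd := bk_le a d (f j).val hd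
    obtain ⟨m, hm⟩ := hcov (blockIdx a d (f i₁).val) (by omega) (by omega)
    obtain ⟨hdesm, hqm, hpm⟩ := downX_descent hadj hm
    have hmne : m ≠ i₁ := by
      intro he; rw [he] at hpm; omega
    have hqm2 := hstep m hdesm hmne
    have hfm1 : (f (m+1)).val = a + blockIdx a d (f i₁).val - 1 :=
      (bk_sing hd (by omega) (by omega)).1 (by omega)
    have hi₁' : i₁ ∈ downX a d f (blockIdx a d (f i₁).val - 1) :=
      mem_downX.2 ⟨by omega, by omega⟩
    have hupne : (upX a d f (blockIdx a d (f i₁).val - 1)).Nonempty := by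
      rw [← Finset.card_pos, card_upX]
      exact Finset.card_pos.2 ⟨i₁, hi₁'⟩
    obtain ⟨u, hu⟩ := hupne
    have hus := upX_struct hd hadj (k := blockIdx a d (f i₁).val - 1) (by omega) hu
    have hfu : f (u+1) = f (m+1) := Fin.ext (by omega)
    have hum : u = m := add_right_cancel (hinj hfu)
    have hub := hus.1
    rw [hum] at hub
    omega
  obtain ⟨imax, -, hmax⟩ :=
    Finset.exists_max_image (univ : Finset (Fin ℓ)) f ⟨0, Finset.mem_univ 0⟩
  have hone : (1 : Fin ℓ) ≠ 0 := by
    intro h0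
    have h1 : (1 : Fin ℓ).val = 1 % ℓ := Fin.val_one' ℓ
    rw [Nat.mod_eq_of_lt (by omega : 1 < ℓ), h0] at h1
    simp at h1
  have hsucc_ne : imax + 1 ≠ imax := by
    intro h
    have h2 : imax + 1 = imax + 0 := by rw [h, add_zero]
    exact hone (add_left_cancel h2)
  have hex : f (imax + 1) < f imax :=
    lt_of_le_of_ne (hmax _ (Finset.mem_univ _)) (fun h => hsucc_ne (hinj h))
  exact ⟨imax, hex, fun y hy => by
    rw [huniq y (Fin.lt_def.1 hy), ← huniq imax (Fin.lt_def.1 hex)]⟩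

end S14

namespace S14
open Finset Function

variable {n d ℓ a : ℕ}

theorem card_Zset (h : a + d - 1 ≤ n) (hd : 3 ≤ d) :
    (univ.filter fun x : Fin n => a ≤ x.val ∧ x.val < a + d - 1).card = d - 1 := by
  rw [← Finset.card_range (d-1)]
  apply Finset.card_bij (fun x _ => x.val - a)
  · intro x hx
    simp only [Finset.mem_filter, Finset.mem_univ, true_and] at hx
    simp only [Finset.mem_range]
    omega
  · intro x hx y hy hxy
    simp only [Finset.mem_filter, Finset.mem_univ, true_and] at hx hy
    exact Fin.ext (by omega)
  · intro b hb
    simp only [Finset.mem_range] at hb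
    refine ⟨⟨a + b, by omega⟩, ?_, by simp⟩
    simp only [Finset.mem_filter, Finset.mem_univ, true_and]
    omega

theorem strictMono_aux [NeZero ℓ] {α : Type*} [Preorder α] {g : Fin ℓ → α}
    (h : ∀ j : Fin ℓ, j.val + 1 < ℓ → g j < g (j+1)) : StrictMono g := by
  obtain ⟨m, rfl⟩ : ∃ m, ℓ = m + 1 := ⟨ℓ - 1, by
    have := NeZero.ne ℓ; omega⟩
  rw [Fin.strictMono_iff_lt_succ]
  intro i
  have hc : i.castSucc + 1 = i.succ := by
    apply Fin.ext
    rw [val_add_one']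
    simp [Fin.lt_def]
  have := h i.castSucc (by rw [Fin.coe_castSucc]; omega)
  rwa [hc] at this

theorem adj'_of [NeZero ℓ] {f : Fin ℓ → Fin n}
    (hadjcyc : ∀ i, (TdnAux a d n).adj (f i) (f (Tournament.cyc i)) = true) :
    Adj' a d f := by
  intro i
  have h := hadjcyc i
  rw [cyc_add_one] at h
  rw [adj_iff] at h
  exact h

theorem of_adj' [NeZero ℓ] {f : Fin ℓ → Fin n} (h : Adj' a d f) :
    ∀ i, (TdnAux a d n).adj (f i) (f (Tournament.cyc i)) = true := by
  intro i
  rw [cyc_add_one, adj_iff]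
  exact h i

theorem enum_adj [NeZero ℓ] (ha : a = (n-d+1)/2) (hd : 3 ≤ d) (hdn : d < n)
    (hℓ1 : 3 ≤ ℓ) (hℓ2 : ℓ ≤ n) (h2ℓ : n + d - 1 ≤ 2*ℓ)
    (M : Finset (Fin n)) (hM : M.card = ℓ)
    (hZ : ∀ x : Fin n, a ≤ x.val → x.val < a+d-1 → x ∈ M) (j : Fin ℓ) :
    (TdnAux a d n).adj (M.orderEmbOfFin hM j) (M.orderEmbOfFin hM (j+1)) = true := by
  have han : a + d - 1 ≤ n - 1 := by omega
  set e := M.orderEmbOfFin hM with he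
  have hmem : ∀ i : Fin ℓ, e i ∈ M := fun i => Finset.orderEmbOfFin_mem M hM i
  have hsurj : ∀ x ∈ M, ∃ i, e i = x := by
    intro x hx
    have : x ∈ Set.range ⇑e := by
      rw [he, Finset.range_orderEmbOfFin]; exact hx
    exact this
  have hmono : StrictMono ⇑e := (M.orderEmbOfFin hM).strictMono
  rw [adj_iff]
  rcases Nat.lt_or_ge (j.val + 1) ℓ with hj | hj
  · -- no wrap
    have hval : ((j+1) : Fin ℓ).val = j.val + 1 := by rw [val_add_one', if_pos hj]
    have hjlt : j < j + 1 := by rw [Fin.lt_def, hval]; omega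
    have hlt : (e j).val < (e (j+1)).val := Fin.lt_def.1 (hmono hjlt)
    left
    refine ⟨hlt, ?_⟩
    by_contra hB
    have hBd := bk_le a d (e (j+1)).val hd
    set c := blockIdx a d (e j).val + 1 with hc
    have hz : (⟨a + c - 1, by omega⟩ : Fin n) ∈ M := hZ _ (show a ≤ a + c - 1 by omega) (show a + c - 1 < a + d - 1 by omega)
    obtain ⟨i, hi⟩ := hsurj _ hz
    have hBz : blockIdx a d (a + c - 1) = c := (bk_sing hd (by omega) (by omega)).2 rfl
    have hlt2 : (e j).val < a + c - 1 := by
      by_contra hge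
      have := bk_mono (a := a) (d := d) (x := a + c - 1) (y := (e j).val) (by omega)
      omega
    have hji : j < i := by
      rw [← (M.orderEmbOfFin hM).lt_iff_lt]
      rw [← he]
      rw [Fin.lt_def, hi]
      exact hlt2
    have hj1i : j + 1 ≤ i := by
      rw [Fin.le_def, hval]
      have := Fin.lt_def.1 hji
      omega
    have hle : (e (j+1)).val ≤ a + c - 1 := by
      have h2 := (M.orderEmbOfFin hM).le_iff_le.2 hj1i
      rw [← he, hi] at h2
      exact Fin.le_def.1 h2
    have := bk_mono (a := a) (d := d) hle
    omega
  · -- wrap around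
    have hjval : j.val = ℓ - 1 := by have := j.isLt; omega
    have hval : ((j+1) : Fin ℓ).val = 0 := by rw [val_add_one', if_neg (by omega)]
    have hbounds : ∀ x ∈ M, e (j+1) ≤ x ∧ x ≤ e j := by
      intro x hx
      obtain ⟨i, rfl⟩ := hsurj x hx
      constructor
      · exact hmono.monotone (by rw [Fin.le_def, hval]; omega)
      · exact hmono.monotone (by rw [Fin.le_def, hjval]; have := i.isLt; omega)
    have hz1 : (⟨a, by omega⟩ : Fin n) ∈ M := hZ _ (show a ≤ a by omega) (show a < a + d - 1 by omega)
    have hzd : (⟨a + d - 2, by omega⟩ : Fin n) ∈ M := hZ _ (show a ≤ a + d - 2 by omega) (show a + d - 2 < a + d - 1 by omega)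
    have hb1 := hbounds _ hz1
    have hbd := hbounds _ hzd
    have hv1 : (e (j+1)).val ≤ a := Fin.le_def.1 hb1.1
    have hud : a + d - 2 ≤ (e j).val := Fin.le_def.1 hbd.2
    have hVlt : (e (j+1)).val < (e j).val := by omega
    right
    refine ⟨hVlt, ?_⟩
    have hBv : blockIdx a d (e (j+1)).val ≤ 1 := by
      have h1 : blockIdx a d a = 1 := (bk_sing hd (k := 1) (by omega) (by omega)).2 (by omega)
      have h2 := bk_mono (a := a) (d := d) hv1
      omega
    have hBu : d - 1 ≤ blockIdx a d (e j).val := by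
      have h1 : blockIdx a d (a + d - 2) = d - 1 := (bk_sing hd (k := d - 1) (by omega) (by omega)).2 (by omega)
      have := bk_mono (a := a) (d := d) hud
      omega
    have hBud := bk_le a d (e j).val hd
    rcases Nat.lt_or_ge (blockIdx a d (e (j+1)).val) 1 with hc1 | hc1
    · omega
    · rcases Nat.lt_or_ge (blockIdx a d (e j).val) d with hc2 | hc2
      · -- bad case : B v = 1, B u = d - 1 : M too small
        exfalso
        have hv : (e (j+1)).val = a := by
          have := (bk_sing (a := a) (x := (e (j+1)).val) hd (k := 1) (by omega) (by omega)).1 (by omega)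
          omega
        have hu : (e j).val = a + d - 2 := by
          have := (bk_sing (a := a) (x := (e j).val) hd (k := d-1) (by omega) (by omega)).1 (by omega)
          omega
        have hsub : M ⊆ univ.filter fun x : Fin n => a ≤ x.val ∧ x.val < a + d - 1 := by
          intro x hx
          have := hbounds x hx
          simp only [Finset.mem_filter, Finset.mem_univ, true_and]
          have h1 := Fin.le_def.1 this.1
          have h2 := Fin.le_def.1 this.2
          omega
        have := Finset.card_le_card hsub
        rw [hM, card_Zset (by omega) hd] at this
        omega
      · omega

end S14

namespace S14
open Finset Function

variable {n d ℓ a : ℕ}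

theorem fin_succ_ne [NeZero ℓ] (hℓ : 2 ≤ ℓ) (i : Fin ℓ) : i + 1 ≠ i := by
  intro h
  have h2 : i + 1 = i + 0 := by rw [h, add_zero]
  have h3 : (1 : Fin ℓ) = 0 := add_left_cancel h2
  have h4 : (1 : Fin ℓ).val = 1 % ℓ := Fin.val_one' ℓ
  rw [Nat.mod_eq_of_lt (by omega : 1 < ℓ), h3] at h4
  simp at h4

theorem count_S [NeZero ℓ] (ha : a = (n-d+1)/2) (hd : 3 ≤ d) (hdn : d < n)
    (hℓ1 : 3 ≤ ℓ) (hℓ2 : ℓ ≤ n) (h2ℓ : n + d - 1 ≤ 2*ℓ) :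
    Nat.card {f : Fin ℓ → Fin n // Function.Injective f ∧
      ∀ i, (TdnAux a d n).adj (f i) (f (Tournament.cyc i)) = true}
    = Nat.card {M : Finset (Fin n) // M.card = ℓ ∧
        ∀ x : Fin n, a ≤ x.val → x.val < a+d-1 → x ∈ M} * ℓ := by
  classical
  have hdesc : ∀ (f : Fin ℓ → Fin n), Function.Injective f →
      (∀ i, (TdnAux a d n).adj (f i) (f (Tournament.cyc i)) = true) →
      ∃! i₀ : Fin ℓ, f (i₀ + 1) < f i₀ :=
    fun f hinj hc => unique_descent ha hd hdn hℓ1 hℓ2 h2ℓ hinj (adj'_of hc)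
  have himgcard : ∀ (f : Fin ℓ → Fin n), Function.Injective f →
      (Finset.image f Finset.univ).card = ℓ := by
    intro f hinj
    rw [Finset.card_image_of_injective _ hinj, Finset.card_univ, Fintype.card_fin]
  have e : {f : Fin ℓ → Fin n // Function.Injective f ∧
      ∀ i, (TdnAux a d n).adj (f i) (f (Tournament.cyc i)) = true}
      ≃ {M : Finset (Fin n) // M.card = ℓ ∧
        ∀ x : Fin n, a ≤ x.val → x.val < a+d-1 → x ∈ M} × Fin ℓ := by
    refine
      { toFun := fun fp =>
          (⟨Finset.image fp.1 Finset.univ, himgcard fp.1 fp.2.1, ?_⟩,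
            (hdesc fp.1 fp.2.1 fp.2.2).choose + 1),
        invFun := fun Mr =>
          ⟨fun k => Mr.1.1.orderEmbOfFin Mr.1.2.1 (k - Mr.2), ?_, ?_⟩,
        left_inv := ?_, right_inv := ?_ }
    · -- Z ⊆ image
      intro x h1 h2
      obtain ⟨i, hi⟩ := stepA ha hd hdn hℓ2 h2ℓ fp.2.1 (adj'_of fp.2.2)
        (k := x.val - a + 1) (by omega) (by omega)
      exact Finset.mem_image.2 ⟨i, Finset.mem_univ i, Fin.ext (by omega)⟩
    · -- injective
      intro x y hxy
      have h1 : x - Mr.2 = y - Mr.2 := (Mr.1.1.orderEmbOfFin Mr.1.2.1).injective hxy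
      exact sub_left_inj.1 h1
    · -- adjacency
      intro i
      rw [cyc_add_one]
      have h1 : (i + 1) - Mr.2 = (i - Mr.2) + 1 := add_sub_right_comm i 1 Mr.2
      show (TdnAux a d n).adj (Mr.1.1.orderEmbOfFin Mr.1.2.1 (i - Mr.2))
        (Mr.1.1.orderEmbOfFin Mr.1.2.1 ((i + 1) - Mr.2)) = true
      rw [h1]
      exact enum_adj ha hd hdn hℓ1 hℓ2 h2ℓ Mr.1.1 Mr.1.2.1 Mr.1.2.2 (i - Mr.2)
    · -- left inverse : recover f
      rintro ⟨f, hinj, hadjc⟩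
      apply Subtype.ext
      funext k
      set i₀ := (hdesc f hinj hadjc).choose with hi₀
      have hspec := (hdesc f hinj hadjc).choose_spec
      set r := i₀ + 1 with hr
      have hfs : ∀ j : Fin ℓ, f (j + r) ∈ Finset.image f Finset.univ :=
        fun j => Finset.mem_image.2 ⟨j + r, Finset.mem_univ _, rfl⟩
      have hmono : StrictMono (fun j : Fin ℓ => f (j + r)) := by
        apply strictMono_aux
        intro j hj
        have hrw : (j + 1) + r = (j + r) + 1 := add_right_comm j 1 r
        show f (j + r) < f ((j + 1) + r)
        rw [hrw]
        have hne : j + r ≠ i₀ := by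
          intro hcontra
          have h0 : (j + 1) + i₀ = 0 + i₀ := by
            rw [zero_add, add_assoc, add_comm 1 i₀, ← hr, hcontra]
          have h1 : j + 1 = 0 := add_right_cancel h0
          have h2 := congrArg Fin.val h1
          rw [val_add_one', if_pos hj] at h2
          simp at h2
        have hnd : ¬ f ((j + r) + 1) < f (j + r) :=
          fun hlt => hne (hspec.2 (j + r) hlt)
        have hneq : f (j + r) ≠ f ((j + r) + 1) := by
          intro hcontra
          exact fin_succ_ne (by omega) (j + r) (hinj hcontra).symm
        exact lt_of_le_of_ne (not_lt.1 hnd) hneq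
      have heq := Finset.orderEmbOfFin_unique (himgcard f hinj) hfs hmono
      have h2 := congrFun heq (k - r)
      show (Finset.image f Finset.univ).orderEmbOfFin (himgcard f hinj) (k - r) = f k
      rw [← h2]
      show f ((k - r) + r) = f k
      rw [sub_add_cancel]
    · -- right inverse : recover (M, r)
      rintro ⟨⟨M, hMc, hMZ⟩, r⟩
      have hsurj : ∀ x ∈ M, ∃ i, M.orderEmbOfFin hMc i = x := by
        intro x hx
        have h1 : x ∈ Set.range ⇑(M.orderEmbOfFin hMc) := by
          rw [Finset.range_orderEmbOfFin]; exact hx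
        exact h1
      have himg : Finset.image (fun k : Fin ℓ => M.orderEmbOfFin hMc (k - r)) Finset.univ
          = M := by
        apply Finset.ext
        intro x
        constructor
        · intro hx
          obtain ⟨k, -, hk⟩ := Finset.mem_image.1 hx
          rw [← hk]
          exact Finset.orderEmbOfFin_mem M hMc _
        · intro hx
          obtain ⟨i, hi⟩ := hsurj x hx
          refine Finset.mem_image.2 ⟨i + r, Finset.mem_univ _, ?_⟩
          rw [add_sub_cancel_right, hi]
      apply Prod.ext
      · exact Subtype.ext himg
      · -- the rotation
        set f : Fin ℓ → Fin n := fun k => M.orderEmbOfFin hMc (k - r) with hf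
        set t : Fin ℓ := ⟨ℓ - 1, by omega⟩ with ht
        have htval : t.val = ℓ - 1 := rfl
        have ht1 : t + 1 = 0 := by
          apply Fin.ext
          rw [val_add_one', if_neg (by omega)]
          simp
        have hdes : f ((r + t) + 1) < f (r + t) := by
          have e1 : (r + t) - r = t := by rw [add_comm, add_sub_cancel_right]
          have e2 : ((r + t) + 1) - r = 0 := by
            rw [add_assoc, ht1, add_zero, sub_self]
          show M.orderEmbOfFin hMc (((r + t) + 1) - r) < M.orderEmbOfFin hMc ((r + t) - r)
          rw [e1, e2]
          exact (M.orderEmbOfFin hMc).strictMono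
            (by rw [Fin.lt_def]; simp only [Fin.val_zero]; omega)
        have hkey : ∀ (h : ∃! i₀ : Fin ℓ, f (i₀ + 1) < f i₀), h.choose + 1 = r := by
          intro h
          have h3 := h.choose_spec.2 (r + t) hdes
          rw [← h3, add_assoc, ht1, add_zero]
        exact hkey _
  rw [Nat.card_congr e, Nat.card_prod]
  congr 1
  rw [Nat.card_eq_fintype_card, Fintype.card_fin]

end S14

namespace S14
open Finset Function

variable {n d ℓ a : ℕ}

theorem count_T (ha : a = (n-d+1)/2) (hd : 3 ≤ d) (hdn : d < n)
    (hℓ1 : 3 ≤ ℓ) (hℓ2 : ℓ ≤ n) (h2ℓ : n + d - 1 ≤ 2*ℓ) :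
    Nat.card {M : Finset (Fin n) // M.card = ℓ ∧
        ∀ x : Fin n, a ≤ x.val → x.val < a+d-1 → x ∈ M}
      = (n - d + 1).choose (ℓ - (d - 1)) := by
  classical
  set Z : Finset (Fin n) :=
    univ.filter (fun x : Fin n => a ≤ x.val ∧ x.val < a + d - 1) with hZdef
  have hZcard : Z.card = d - 1 := card_Zset (by omega) hd
  have hZsub : ∀ (M : Finset (Fin n)),
      (∀ x : Fin n, a ≤ x.val → x.val < a+d-1 → x ∈ M) → Z ⊆ M := by
    intro M hMZ x hx
    rw [hZdef] at hx
    simp only [Finset.mem_filter, Finset.mem_univ, true_and] at hx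
    exact hMZ x hx.1 hx.2
  have e : {M : Finset (Fin n) // M.card = ℓ ∧
      ∀ x : Fin n, a ≤ x.val → x.val < a+d-1 → x ∈ M}
      ≃ {B : Finset (Fin n) // B ∈ Finset.powersetCard (ℓ - (d-1)) Zᶜ} := by
    refine { toFun := fun Mp => ⟨Mp.1 \ Z, ?_⟩,
             invFun := fun Bp => ⟨Bp.1 ∪ Z, ?_, ?_⟩,
             left_inv := ?_, right_inv := ?_ }
    · rw [Finset.mem_powersetCard]
      constructor
      · intro x hx
        rw [Finset.mem_compl]
        exact (Finset.mem_sdiff.1 hx).2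
      · rw [Finset.card_sdiff_of_subset (hZsub Mp.1 Mp.2.2), Mp.2.1, hZcard]
    · have hB := Finset.mem_powersetCard.1 Bp.2
      have hdisj : Disjoint Bp.1 Z := by
        rw [Finset.disjoint_left]
        intro x hx hxZ
        exact (Finset.mem_compl.1 (hB.1 hx)) hxZ
      rw [Finset.card_union_of_disjoint hdisj, hB.2, hZcard]
      omega
    · intro x h1 h2
      apply Finset.mem_union_right
      rw [hZdef]
      simp only [Finset.mem_filter, Finset.mem_univ, true_and]
      exact ⟨h1, h2⟩
    · rintro ⟨M, hMc, hMZ⟩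
      exact Subtype.ext (Finset.sdiff_union_of_subset (hZsub M hMZ))
    · rintro ⟨B, hB⟩
      have hB' := Finset.mem_powersetCard.1 hB
      have hdisj : Disjoint B Z := by
        rw [Finset.disjoint_left]
        intro x hx hxZ
        exact (Finset.mem_compl.1 (hB'.1 hx)) hxZ
      exact Subtype.ext (Finset.union_sdiff_cancel_right hdisj)
  rw [Nat.card_congr e, Nat.card_eq_finsetCard, Finset.card_powersetCard]
  congr 1
  rw [Finset.card_compl, hZcard, Fintype.card_fin]
  omega

end S14

/-- For `n > d ≥ 3` and `3 ≤ ℓ ≤ n` with `n + d - 1 ≤ 2ℓ`,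
`c_ℓ(T_{d,n}) = C(n-d+1, n-ℓ)`. -/
theorem statement_14 (n d ℓ : ℕ) (hd : 3 ≤ d) (hdn : d < n)
    (hℓ1 : 3 ≤ ℓ) (hℓ2 : ℓ ≤ n) (h : n + d - 1 ≤ 2 * ℓ) :
    (Tdn d n).circCount ℓ = Nat.choose (n - d + 1) (n - ℓ) := by
  haveI : NeZero ℓ := ⟨by omega⟩
  have hTdn : Tdn d n = TdnAux ((n-d+1)/2) d n := rfl
  show Nat.card {f : Fin ℓ → Fin n // Function.Injective f ∧
      ∀ i, (Tdn d n).adj (f i) (f (Tournament.cyc i)) = true} / ℓ = _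
  rw [hTdn, S14.count_S rfl hd hdn hℓ1 hℓ2 h, S14.count_T rfl hd hdn hℓ1 hℓ2 h,
    Nat.mul_div_cancel _ (by omega : 0 < ℓ)]
  have h1 : ℓ - (d - 1) = (n - d + 1) - (n - ℓ) := by omega
  rw [h1, Nat.choose_symm (by omega)]
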